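/- Let V be a finite-dimensional real inner product space, let V_1, …, V_N ⊆ V be linear subspaces, and let P_j denote the orthogonal projection of V onto V_j. Suppose k₀ ≥ 1 is such that for each i the number of indices j for which V_i and V_j are not orthogonal is at most k₀. Then for every v ∈ V: Σ_{j=1}^N ‖P_j v‖² ≤ k₀ ‖v‖², and consequently ⟨(Σ_{j=1}^N P_j) v, v⟩ ≤ k₀ ‖v‖², i.e. the largest eigenvalue of the additive Schwarz operator Σ_j P_j is at most k₀. -/

import Mathlib

open scoped RealInnerProductSpace

lemma inner_orthProj_self_real {V : Type*} [NormedAddCommGroup V] [InnerProductSpace ℝ V]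
    (K : Submodule ℝ V) [K.HasOrthogonalProjection] (v : V) :
    ⟪(Submodule.orthogonalProjection K v : V), v⟫ = ‖(Submodule.orthogonalProjection K v : V)‖ ^ 2 := by
  have h0 : ⟪v - (Submodule.orthogonalProjection K v : V), (Submodule.orthogonalProjection K v : V)⟫ = 0 :=
    Submodule.starProjection_inner_eq_zero v _ (Submodule.coe_mem _)
  rw [inner_sub_left, sub_eq_zero] at h0
  rw [real_inner_comm, h0, real_inner_self_eq_norm_sq]

/-- Finite-overlap upper spectral bound for the additive Schwarz operator: if for each `i` the
number of subspaces `V j` not orthogonal to `V i` is at most `k₀`, then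
`∑ j ‖P_j v‖² ≤ k₀ ‖v‖²` and `⟪(∑ j P_j) v, v⟫ ≤ k₀ ‖v‖²`, i.e. the largest eigenvalue of the
additive Schwarz operator `∑ j P_j` is at most `k₀`. -/
theorem additive_schwarz_upper_bound
    {V : Type*} [NormedAddCommGroup V] [InnerProductSpace ℝ V] [FiniteDimensional ℝ V]
    {N : ℕ} (Vj : Fin N → Submodule ℝ V)
    (k₀ : ℝ) (hk₀ : 1 ≤ k₀)
    (hoverlap : ∀ i : Fin N,
      (({j : Fin N | ¬ ∀ x ∈ Vj i, ∀ y ∈ Vj j, ⟪x, y⟫ = 0}).ncard : ℝ) ≤ k₀) :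
    ∀ v : V,
      (∑ j, ‖(Submodule.orthogonalProjection (Vj j) v : V)‖ ^ 2 ≤ k₀ * ‖v‖ ^ 2) ∧
      ⟪∑ j, (Submodule.orthogonalProjection (Vj j) v : V), v⟫ ≤ k₀ * ‖v‖ ^ 2 := by
  classical
  intro v
  set p : Fin N → V := fun j => (Submodule.orthogonalProjection (Vj j) v : V) with hp
  set a : Fin N → ℝ := fun j => ‖p j‖ ^ 2 with ha
  -- the non-orthogonality relation and its symmetry
  set R : Fin N → Fin N → Prop := fun i j => ¬ ∀ x ∈ Vj i, ∀ y ∈ Vj j, ⟪x, y⟫ = 0 with hR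
  have hRsymm : ∀ i j, R i j ↔ R j i := by
    intro i j
    simp only [hR, not_iff_not]
    constructor <;> intro h x hx y hy <;>
      · rw [real_inner_comm]; exact h y hy x hx
  set S : Fin N → Finset (Fin N) := fun i => Finset.univ.filter (fun j => R i j) with hS
  have hScard : ∀ i, ((S i).card : ℝ) ≤ k₀ := by
    intro i
    have : {j : Fin N | R i j} = ↑(S i) := by
      ext j; simp [hS]
    have h := hoverlap i
    rwa [show {j : Fin N | ¬ ∀ x ∈ Vj i, ∀ y ∈ Vj j, ⟪x, y⟫ = 0} = {j : Fin N | R i j} from rfl,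
      this, Set.ncard_coe_finset] at h
  -- sum of a equals inner of sum with v
  have hsum_inner : ⟪∑ j, p j, v⟫ = ∑ j, a j := by
    rw [sum_inner]
    exact Finset.sum_congr rfl fun j _ => inner_orthProj_self_real _ _
  have ha_nonneg : ∀ j, 0 ≤ a j := fun j => sq_nonneg _
  have hT_nonneg : 0 ≤ ∑ j, a j := Finset.sum_nonneg fun j _ => ha_nonneg j
  -- norm of sum squared
  have hzero : ∀ i j, ¬ R i j → ⟪p i, p j⟫ = 0 := by
    intro i j h
    rw [not_not] at h
    exact h _ (Submodule.coe_mem _) _ (Submodule.coe_mem _)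
  have hnormsq : ‖∑ j, p j‖ ^ 2 = ∑ i, ∑ j ∈ S i, ⟪p i, p j⟫ := by
    rw [← real_inner_self_eq_norm_sq, sum_inner]
    refine Finset.sum_congr rfl fun i _ => ?_
    rw [inner_sum]
    rw [← Finset.sum_filter_add_sum_filter_not Finset.univ (fun j => R i j) (fun j => ⟪p i, p j⟫)]
    have : ∑ j ∈ Finset.univ.filter (fun j => ¬ R i j), ⟪p i, p j⟫ = 0 :=
      Finset.sum_eq_zero fun j hj => hzero i j (Finset.mem_filter.1 hj).2
    rw [this, add_zero]
  -- bound each term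
  have hbound : ∀ i j, ⟪p i, p j⟫ ≤ (a i + a j) / 2 := by
    intro i j
    have h1 : ⟪p i, p j⟫ ≤ ‖p i‖ * ‖p j‖ := real_inner_le_norm _ _
    have h2 : a i = ‖p i‖ ^ 2 := rfl
    have h3 : a j = ‖p j‖ ^ 2 := rfl
    nlinarith [sq_nonneg (‖p i‖ - ‖p j‖)]
  have hswap : (∑ i, ∑ j ∈ S i, a j) = ∑ i, ∑ j ∈ S i, a i := by
    rw [Finset.sum_comm' (s' := fun j => S j) (t' := Finset.univ)
      (f := fun (i j : Fin N) => a j)]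
    intro i j
    simp only [Finset.mem_univ, true_and, and_true, hS, Finset.mem_filter, hRsymm i j]
  have hmain : ‖∑ j, p j‖ ^ 2 ≤ k₀ * ∑ j, a j := by
    rw [hnormsq]
    calc ∑ i, ∑ j ∈ S i, ⟪p i, p j⟫ ≤ ∑ i, ∑ j ∈ S i, (a i + a j) / 2 :=
          Finset.sum_le_sum fun i _ => Finset.sum_le_sum fun j _ => hbound i j
      _ = ((∑ i, ∑ j ∈ S i, a i) + ∑ i, ∑ j ∈ S i, a j) / 2 := by
          rw [← Finset.sum_add_distrib]
          rw [Finset.sum_div]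
          refine Finset.sum_congr rfl fun i _ => ?_
          rw [← Finset.sum_add_distrib, Finset.sum_div]
      _ = ∑ i, ∑ j ∈ S i, a i := by rw [hswap]; ring
      _ = ∑ i, ((S i).card : ℝ) * a i := by
          refine Finset.sum_congr rfl fun i _ => ?_
          rw [Finset.sum_const, nsmul_eq_mul]
      _ ≤ ∑ i, k₀ * a i :=
          Finset.sum_le_sum fun i _ => mul_le_mul_of_nonneg_right (hScard i) (ha_nonneg i)
      _ = k₀ * ∑ j, a j := by rw [Finset.mul_sum]
  -- conclude
  have hkey : ∑ j, a j ≤ k₀ * ‖v‖ ^ 2 := by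
    rcases eq_or_lt_of_le hT_nonneg with h | h
    · rw [← h]; positivity
    · have hcs : ∑ j, a j ≤ ‖∑ j, p j‖ * ‖v‖ := by
        rw [← hsum_inner]; exact real_inner_le_norm _ _
      nlinarith [norm_nonneg (∑ j, p j), norm_nonneg v, sq_nonneg (‖∑ j, p j‖ - ‖v‖)]
  exact ⟨hkey, by rw [hsum_inner]; exact hkey⟩
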